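/- Let R be a commutative local ring with maximal ideal 𝔪 whose residue field R/𝔪 is isomorphic to 𝔽₂. In the group ring ℤ[G(R)], let N be the additive subgroup generated by all elements ([a₁]+[a₂]+[a₃]+[a₄]) − ([b₁]+[b₂]+[b₃]+[b₄]) for units a₁,…,a₄,b₁,…,b₄ of R admitting an invertible 4×4 matrix P over R with P·diag(a₁,a₂,a₃,a₄)·Pᵀ = diag(b₁,b₂,b₃,b₄). Then N equals the additive subgroup generated by the following two families of elements: (1) [a]+[b] − [a+n²b] − [b+m²a], for units a, b of R and non-invertible elements m, n ∈ 𝔪 with m·a + n·b = 0; and (2) [a]+[b]+[c]+[d] − [u]−[v]−[w]−[a·b·c·d·u·v·w], for units a, b, c, d of R, where u := a + c⁻¹ + d⁻¹, v := a⁻¹ + b⁻¹ + d and w := a + b + a²·c. (Equivalently, the kernel of the surjection ℤ[G(R)] → GW(R) is additively generated by the relations (1) and (2).) -/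

import Mathlib

noncomputable section

/-- The subgroup of squares of units of a commutative ring. -/
def squareUnits (R : Type) [CommRing R] : Subgroup Rˣ :=
  (powMonoidHom 2 : Rˣ →* Rˣ).range

/-- The group of square classes `Rˣ/(Rˣ)²`. -/
def SqCl (R : Type) [CommRing R] : Type := Rˣ ⧸ squareUnits R

instance (R : Type) [CommRing R] : CommGroup (SqCl R) :=
  QuotientGroup.Quotient.commGroup (squareUnits R)

/-- The square class `[a]` of a unit `a`. -/
def cls {R : Type} [CommRing R] (a : Rˣ) : SqCl R := QuotientGroup.mk a

/-- The group ring `ℤ[Rˣ/(Rˣ)²]`. -/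
abbrev GRing (R : Type) [CommRing R] := MonoidAlgebra ℤ (SqCl R)

/-- The generator `[a]` of the group ring, for a unit `a`. -/
def gen {R : Type} [CommRing R] (a : Rˣ) : GRing R :=
  MonoidAlgebra.of ℤ (SqCl R) (cls a)

/-- The set of relations defining the Grothendieck–Witt ring of a (connected semi-)local ring:
`([a₁]+[a₂]+[a₃]+[a₄]) − ([b₁]+[b₂]+[b₃]+[b₄])` whenever there exists `P ∈ GL₄(R)` with
`P ⬝ diag(a₁,…,a₄) ⬝ Pᵀ = diag(b₁,…,b₄)`. -/
def gwRel (R : Type) [CommRing R] : Set (GRing R) :=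
  {x | ∃ (a b : Fin 4 → Rˣ) (P : Matrix (Fin 4) (Fin 4) R),
    IsUnit P.det ∧
    P * Matrix.diagonal (fun i => (a i : R)) * P.transpose =
      Matrix.diagonal (fun i => (b i : R)) ∧
    x = (∑ i, gen (a i)) - (∑ i, gen (b i))}

/-- The (symmetric) Grothendieck–Witt ring of `R`, presented à la Knebusch–Rosenberg–Ware. -/
abbrev GW (R : Type) [CommRing R] := GRing R ⧸ Ideal.span (gwRel R)

/-- The class `[a] ∈ GW(R)` of a unit `a`. -/
def gw {R : Type} [CommRing R] (a : Rˣ) : GW R :=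
  Ideal.Quotient.mk (Ideal.span (gwRel R)) (gen a)

/-- The (symmetric) Witt ring of `R` : the quotient of `GW(R)` by the ideal generated by the
hyperbolic element `[1] + [-1]`. -/
abbrev Wr (R : Type) [CommRing R] := GW R ⧸ Ideal.span {gw (R := R) 1 + gw (-1)}

/-- The class in the Witt ring of a unit `a`. -/
def wcl {R : Type} [CommRing R] (a : Rˣ) : Wr R :=
  Ideal.Quotient.mk (Ideal.span {gw (R := R) 1 + gw (-1)}) (gw a)


namespace GWAux

open IsLocalRing Matrix

variable {R : Type} [CommRing R] [IsLocalRing R]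

/-- Family (1) of relations. -/
def rel1 (R : Type) [CommRing R] [IsLocalRing R] : Set (GRing R) :=
  {x : GRing R | ∃ (a b a' b' : Rˣ) (m n : R),
      m ∈ maximalIdeal R ∧ n ∈ maximalIdeal R ∧
      m * (a : R) + n * (b : R) = 0 ∧
      (a' : R) = (a : R) + n ^ 2 * (b : R) ∧
      (b' : R) = (b : R) + m ^ 2 * (a : R) ∧
      x = (gen a + gen b) - (gen a' + gen b')}

/-- Family (2) of relations. -/
def rel2 (R : Type) [CommRing R] : Set (GRing R) :=
  {x : GRing R | ∃ (a b c d u v w : Rˣ),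
      (u : R) = (a : R) + ((c⁻¹ : Rˣ) : R) + ((d⁻¹ : Rˣ) : R) ∧
      (v : R) = ((a⁻¹ : Rˣ) : R) + ((b⁻¹ : Rˣ) : R) + (d : R) ∧
      (w : R) = (a : R) + (b : R) + (a : R) ^ 2 * (c : R) ∧
      x = (gen a + gen b + gen c + gen d) -
        (gen u + gen v + gen w + gen (a * b * c * d * (u * v * w)))}

/-! ### Square class generators -/

lemma gen_sq (a s : Rˣ) : gen (a * s ^ 2) = gen a := by
  unfold gen cls
  congr 1
  exact QuotientGroup.mk_mul_of_mem a ⟨s, rfl⟩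

lemma gen_eq_of_sq (x y s : Rˣ) (h : (x : R) = (y : R) * (s : R) ^ 2) : gen x = gen y := by
  have hx : x = y * s ^ 2 := by
    ext
    rw [Units.val_mul, Units.val_pow_eq_pow_val]
    exact h
  rw [hx, gen_sq]

lemma gen_inv (a : Rˣ) : gen a⁻¹ = gen a := by
  have h : a⁻¹ = a * (a⁻¹) ^ 2 := by group
  rw [h, gen_sq]

/-! ### The residue map to `ZMod 2` -/

lemma isUnit_iff_f (f : R →+* ZMod 2) (hf : ∀ x : R, f x = 0 ↔ x ∈ maximalIdeal R)
    (x : R) : IsUnit x ↔ f x = 1 := by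
  constructor
  · intro h
    have hx : x ∉ maximalIdeal R := by
      rw [IsLocalRing.mem_maximalIdeal, mem_nonunits_iff, not_not]
      exact h
    have hne : f x ≠ 0 := fun h0 => hx ((hf x).mp h0)
    have hz : ∀ z : ZMod 2, z ≠ 0 → z = 1 := by decide
    exact hz _ hne
  · intro h1
    have hx : x ∉ maximalIdeal R := by
      intro hm
      have h0 : f x = 0 := (hf x).mpr hm
      rw [h0] at h1
      exact absurd h1 (by decide)
    rw [IsLocalRing.mem_maximalIdeal, mem_nonunits_iff, not_not] at hx
    exact hx

/-! ### Sums over `Fin 4` with small support -/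

lemma sum4_support2 {M : Type} [AddCommMonoid M] {g : Fin 4 → M} {i j : Fin 4} (hij : i ≠ j)
    (h : ∀ k, k ≠ i → k ≠ j → g k = 0) : ∑ k, g k = g i + g j := by
  have hs := Finset.sum_subset (Finset.subset_univ ({i, j} : Finset (Fin 4)))
    (fun k _ hk => by
      simp only [Finset.mem_insert, Finset.mem_singleton, not_or] at hk
      exact h k hk.1 hk.2)
  rw [← hs, Finset.sum_pair hij]

lemma sum4_support1 {M : Type} [AddCommMonoid M] {g : Fin 4 → M} {i : Fin 4}
    (h : ∀ k, k ≠ i → g k = 0) : ∑ k, g k = g i :=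
  Finset.sum_eq_single i (fun k _ hk => h k hk) (by simp)

/-! ### Gram entries -/

lemma gram_expand (P : Matrix (Fin 4) (Fin 4) R) (dv : Fin 4 → R) (x y : Fin 4) :
    (P * Matrix.diagonal dv * Pᵀ) x y = ∑ k, P x k * (dv k * P y k) := by
  rw [Matrix.mul_assoc, Matrix.mul_apply]
  refine Finset.sum_congr rfl fun k _ => ?_
  rw [Matrix.diagonal_mul, Matrix.transpose_apply]

lemma gram_entries {P : Matrix (Fin 4) (Fin 4) R} {dv bv : Fin 4 → R}
    (h : P * Matrix.diagonal dv * Pᵀ = Matrix.diagonal bv) (x y : Fin 4) :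
    ∑ k, P x k * (dv k * P y k) = Matrix.diagonal bv x y := by
  rw [← gram_expand, h]

/-! ### Binary moves -/

def bmove (i j : Fin 4) (α β r s : R) : Matrix (Fin 4) (Fin 4) R :=
  Matrix.of fun x y =>
    if x = i then (if y = i then α else if y = j then β else 0)
    else if x = j then (if y = i then r else if y = j then s else 0)
    else if y = x then 1 else 0

lemma bmove_row_i (i j : Fin 4) (α β r s : R) (y : Fin 4) :
    bmove i j α β r s i y = if y = i then α else if y = j then β else 0 := by
  simp [bmove]

lemma bmove_row_j (i j : Fin 4) (hij : i ≠ j) (α β r s : R) (y : Fin 4) :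
    bmove i j α β r s j y = if y = i then r else if y = j then s else 0 := by
  simp [bmove, hij.symm]

lemma bmove_row_other (i j : Fin 4) (α β r s : R) {x : Fin 4} (hxi : x ≠ i) (hxj : x ≠ j)
    (y : Fin 4) : bmove i j α β r s x y = if y = x then 1 else 0 := by
  simp [bmove, hxi, hxj]

lemma bmove_ii (i j : Fin 4) (α β r s : R) : bmove i j α β r s i i = α := by simp [bmove]

lemma bmove_ij (i j : Fin 4) (hij : i ≠ j) (α β r s : R) : bmove i j α β r s i j = β := by
  simp [bmove, hij.symm]

lemma bmove_ji (i j : Fin 4) (hij : i ≠ j) (α β r s : R) : bmove i j α β r s j i = r := by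
  simp [bmove, hij.symm]

lemma bmove_jj (i j : Fin 4) (hij : i ≠ j) (α β r s : R) : bmove i j α β r s j j = s := by
  simp [bmove, hij.symm]

lemma bmove_gram (i j : Fin 4) (hij : i ≠ j) (α β r s : R) (dv dv' : Fin 4 → R)
    (hcross : α * r * dv i + β * s * dv j = 0)
    (h'i : dv' i = α ^ 2 * dv i + β ^ 2 * dv j) (h'j : dv' j = r ^ 2 * dv i + s ^ 2 * dv j)
    (h'o : ∀ k, k ≠ i → k ≠ j → dv' k = dv k) :
    bmove i j α β r s * Matrix.diagonal dv * (bmove i j α β r s)ᵀ = Matrix.diagonal dv' := by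
  ext x y
  rw [gram_expand]
  rcases eq_or_ne i x with rfl | hxi
  · rcases eq_or_ne i y with rfl | hyi
    · rw [sum4_support2 hij (fun k hk1 hk2 => by
        rw [bmove_row_i, if_neg hk1, if_neg hk2, zero_mul])]
      rw [bmove_ii, bmove_ij i j hij, Matrix.diagonal_apply_eq, h'i]
      ring
    · rcases eq_or_ne j y with rfl | hyj
      · rw [sum4_support2 hij (fun k hk1 hk2 => by
          rw [bmove_row_i, if_neg hk1, if_neg hk2, zero_mul])]
        rw [bmove_ii, bmove_ij i j hij, bmove_ji i j hij, bmove_jj i j hij,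
          Matrix.diagonal_apply_ne _ hij]
        linear_combination hcross
      · rw [Finset.sum_eq_zero fun k _ => ?_, Matrix.diagonal_apply_ne _ hyi]
        by_cases hk : k = y
        · rw [hk, bmove_row_i, if_neg (Ne.symm hyi), if_neg (Ne.symm hyj), zero_mul]
        · rw [bmove_row_other i j α β r s (Ne.symm hyi) (Ne.symm hyj), if_neg hk,
            mul_zero, mul_zero]
  · rcases eq_or_ne j x with rfl | hxj
    · rcases eq_or_ne i y with rfl | hyi
      · rw [sum4_support2 hij (fun k hk1 hk2 => by
          rw [bmove_row_j i j hij, if_neg hk1, if_neg hk2, zero_mul])]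
        rw [bmove_ii, bmove_ij i j hij, bmove_ji i j hij, bmove_jj i j hij,
          Matrix.diagonal_apply_ne _ hij.symm]
        linear_combination hcross
      · rcases eq_or_ne j y with rfl | hyj
        · rw [sum4_support2 hij (fun k hk1 hk2 => by
            rw [bmove_row_j i j hij, if_neg hk1, if_neg hk2, zero_mul])]
          rw [bmove_ji i j hij, bmove_jj i j hij, Matrix.diagonal_apply_eq, h'j]
          ring
        · rw [Finset.sum_eq_zero fun k _ => ?_, Matrix.diagonal_apply_ne _ hyj]
          by_cases hk : k = y
          · rw [hk, bmove_row_j i j hij, if_neg (Ne.symm hyi), if_neg (Ne.symm hyj), zero_mul]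
          · rw [bmove_row_other i j α β r s (Ne.symm hyi) (Ne.symm hyj), if_neg hk,
              mul_zero, mul_zero]
    · rw [sum4_support1 (i := x) (fun k hk => by
        rw [bmove_row_other i j α β r s (Ne.symm hxi) (Ne.symm hxj), if_neg hk, zero_mul])]
      rw [bmove_row_other i j α β r s (Ne.symm hxi) (Ne.symm hxj), if_pos rfl, one_mul]
      rcases eq_or_ne i y with rfl | hyi
      · rw [bmove_row_i, if_neg (Ne.symm hxi), if_neg (Ne.symm hxj), mul_zero,
          Matrix.diagonal_apply_ne _ (Ne.symm hxi)]
      · rcases eq_or_ne j y with rfl | hyj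
        · rw [bmove_row_j i j hij, if_neg (Ne.symm hxi), if_neg (Ne.symm hxj), mul_zero,
            Matrix.diagonal_apply_ne _ (Ne.symm hxj)]
        · rw [bmove_row_other i j α β r s (Ne.symm hyi) (Ne.symm hyj)]
          by_cases hxy : x = y
          · rw [if_pos hxy, mul_one, hxy, Matrix.diagonal_apply_eq,
              h'o y (by rw [← hxy]; exact Ne.symm hxi) (by rw [← hxy]; exact Ne.symm hxj)]
          · rw [if_neg hxy, mul_zero, Matrix.diagonal_apply_ne _ hxy]

lemma bmove_mul (i j : Fin 4) (hij : i ≠ j) (α β r s e : R)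
    (he : (α * s - β * r) * e = 1) :
    bmove i j (s * e) (-(β * e)) (-(r * e)) (α * e) * bmove i j α β r s = 1 := by
  ext x y
  rw [Matrix.mul_apply]
  rcases eq_or_ne i x with rfl | hxi
  · rw [sum4_support2 hij (fun k hk1 hk2 => by
      rw [bmove_row_i, if_neg hk1, if_neg hk2, zero_mul])]
    rw [bmove_ii, bmove_ij i j hij]
    rcases eq_or_ne i y with rfl | hyi
    · rw [bmove_ii, bmove_ji i j hij, Matrix.one_apply_eq]
      linear_combination he
    · rcases eq_or_ne j y with rfl | hyj
      · rw [bmove_ij i j hij, bmove_jj i j hij, Matrix.one_apply_ne hij]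
        ring
      · rw [bmove_row_i, if_neg (Ne.symm hyi), if_neg (Ne.symm hyj),
          bmove_row_j i j hij, if_neg (Ne.symm hyi), if_neg (Ne.symm hyj),
          Matrix.one_apply_ne hyi]
        ring
  · rcases eq_or_ne j x with rfl | hxj
    · rw [sum4_support2 hij (fun k hk1 hk2 => by
        rw [bmove_row_j i j hij, if_neg hk1, if_neg hk2, zero_mul])]
      rw [bmove_ji i j hij, bmove_jj i j hij]
      rcases eq_or_ne i y with rfl | hyi
      · rw [bmove_ii, bmove_ji i j hij, Matrix.one_apply_ne hij.symm]
        ring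
      · rcases eq_or_ne j y with rfl | hyj
        · rw [bmove_ij i j hij, bmove_jj i j hij, Matrix.one_apply_eq]
          linear_combination he
        · rw [bmove_row_i, if_neg (Ne.symm hyi), if_neg (Ne.symm hyj),
            bmove_row_j i j hij, if_neg (Ne.symm hyi), if_neg (Ne.symm hyj),
            Matrix.one_apply_ne hyj]
          ring
    · rw [sum4_support1 (i := x) (fun k hk => by
        rw [bmove_row_other i j (s * e) (-(β * e)) (-(r * e)) (α * e)
          (Ne.symm hxi) (Ne.symm hxj), if_neg hk, zero_mul])]
      rw [bmove_row_other i j (s * e) (-(β * e)) (-(r * e)) (α * e)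
        (Ne.symm hxi) (Ne.symm hxj), if_pos rfl, one_mul]
      rw [bmove_row_other i j α β r s (Ne.symm hxi) (Ne.symm hxj)]
      by_cases hxy : x = y
      · rw [if_pos hxy.symm, hxy, Matrix.one_apply_eq]
      · rw [if_neg fun h => hxy h.symm, Matrix.one_apply_ne hxy]

set_option linter.unusedSectionVars false in
lemma bmove_map (i j : Fin 4) (α β r s : R) (f : R →+* ZMod 2) :
    (bmove i j α β r s).map f = bmove i j (f α) (f β) (f r) (f s) := by
  ext x y
  simp only [Matrix.map_apply, bmove, Matrix.of_apply]
  split_ifs <;> simp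

end GWAux

namespace GWAux

open Matrix

/-! ### Orthogonal `4 × 4` matrices over `ZMod 2` -/

def isP (M : Matrix (Fin 4) (Fin 4) (ZMod 2)) (σ : Fin 4 → Fin 4) : Prop :=
  ∀ i j, M i j = if j = σ i then 1 else 0

def isE (M : Matrix (Fin 4) (Fin 4) (ZMod 2)) (σ : Fin 4 → Fin 4) : Prop :=
  ∀ i j, M i j = if j = σ i then 0 else 1

lemma third : ∀ i k : Fin 4, ∃ m, m ≠ i ∧ m ≠ k := by decide

lemma zrow : ∀ r : Fin 4 → ZMod 2, (∑ j, r j * r j) = 1 →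
    (∃ l, ∀ j, r j = if j = l then 1 else 0) ∨ (∃ l, ∀ j, r j = if j = l then 0 else 1) := by
  decide

lemma zmix : ∀ (l1 l2 : Fin 4) (t : Fin 4 → ZMod 2),
    (∑ j, (if j = l1 then (1 : ZMod 2) else 0) * (if j = l2 then 0 else 1)) = 0 →
    (∑ j, (if j = l1 then (1 : ZMod 2) else 0) * t j) = 0 →
    (∑ j, (if j = l2 then (0 : ZMod 2) else 1) * t j) = 0 →
    (∑ j, t j * t j) = 1 → False := by
  decide

lemma zdot1 : ∀ l : Fin 4,
    (∑ j, (if j = l then (1 : ZMod 2) else 0) * (if j = l then 1 else 0)) = 1 := by decide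

lemma zdot3 : ∀ l : Fin 4,
    (∑ j, (if j = l then (0 : ZMod 2) else 1) * (if j = l then 0 else 1)) = 1 := by decide

lemma classify (M : Matrix (Fin 4) (Fin 4) (ZMod 2)) (h : M * Mᵀ = 1) :
    ∃ σ : Fin 4 → Fin 4, Function.Bijective σ ∧ (isP M σ ∨ isE M σ) := by
  have hdot : ∀ i k, (∑ j, M i j * M k j) = if i = k then 1 else 0 := by
    intro i k
    have h1 := congrFun (congrFun h i) k
    rw [Matrix.mul_apply] at h1
    simpa [Matrix.transpose_apply, Matrix.one_apply] using h1
  have hrow : ∀ i, (∃ l, ∀ j, M i j = if j = l then 1 else 0) ∨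
      (∃ l, ∀ j, M i j = if j = l then 0 else 1) := by
    intro i
    refine zrow (fun j => M i j) ?_
    have := hdot i i
    rwa [if_pos rfl] at this
  by_cases hall : ∀ i, ∃ l, ∀ j, M i j = if j = l then 1 else 0
  · choose σ hσ using hall
    have hinj : Function.Injective σ := by
      intro i k hik
      by_contra hne
      have h0 := hdot i k
      rw [if_neg hne] at h0
      have h1 : (∑ j, M i j * M k j) = 1 := by
        rw [Finset.sum_congr rfl fun j _ => by rw [hσ i j, hσ k j, hik]]
        exact zdot1 (σ k)
      rw [h0] at h1
      exact absurd h1 (by decide)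
    exact ⟨σ, Finite.injective_iff_bijective.mp hinj, Or.inl hσ⟩
  · push_neg at hall
    obtain ⟨i₀, hi₀⟩ := hall
    have h3' : ∃ l, ∀ j, M i₀ j = if j = l then 0 else 1 := by
      rcases hrow i₀ with h1' | h3'
      · obtain ⟨l, hl⟩ := h1'
        obtain ⟨jj, hjj⟩ := hi₀ l
        exact absurd (hl jj) hjj
      · exact h3'
    obtain ⟨l2, hl2⟩ := h3'
    have hrow3 : ∀ i, ∃ l, ∀ j, M i j = if j = l then 0 else 1 := by
      intro i
      rcases hrow i with h1 | h3
      · exfalso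
        obtain ⟨l1, hl1⟩ := h1
        have hne : i ≠ i₀ := by
          rintro rfl
          obtain ⟨jj, hjj⟩ := hi₀ l1
          exact hjj (hl1 jj)
        obtain ⟨m, hmi, hmk⟩ := third i i₀
        refine zmix l1 l2 (fun j => M m j) ?_ ?_ ?_ ?_
        · have e1 : (∑ j, (if j = l1 then (1 : ZMod 2) else 0) * (if j = l2 then 0 else 1))
              = ∑ j, M i j * M i₀ j :=
            Finset.sum_congr rfl fun j _ => by rw [hl1 j, hl2 j]
          rw [e1, hdot i i₀, if_neg hne]
        · have e2 : (∑ j, (if j = l1 then (1 : ZMod 2) else 0) * M m j)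
              = ∑ j, M i j * M m j :=
            Finset.sum_congr rfl fun j _ => by rw [hl1 j]
          rw [e2, hdot i m, if_neg fun hh => hmi hh.symm]
        · have e3 : (∑ j, (if j = l2 then (0 : ZMod 2) else 1) * M m j)
              = ∑ j, M i₀ j * M m j :=
            Finset.sum_congr rfl fun j _ => by rw [hl2 j]
          rw [e3, hdot i₀ m, if_neg fun hh => hmk hh.symm]
        · have := hdot m m
          rwa [if_pos rfl] at this
      · exact h3
    choose σ hσ using hrow3
    have hinj : Function.Injective σ := by
      intro i k hik
      by_contra hne
      have h0 := hdot i k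
      rw [if_neg hne] at h0
      have h1 : (∑ j, M i j * M k j) = 1 := by
        rw [Finset.sum_congr rfl fun j _ => by rw [hσ i j, hσ k j, hik]]
        exact zdot3 (σ k)
      rw [h0] at h1
      exact absurd h1 (by decide)
    exact ⟨σ, Finite.injective_iff_bijective.mp hinj, Or.inr hσ⟩

def rho0 : Fin 4 → Fin 4 := ![1, 2, 3, 0]

lemma zprodE : ∀ l j : Fin 4,
    (∑ k, (if k = l then (0 : ZMod 2) else 1) * (if j = rho0 k then 0 else 1)) =
      if j = rho0 l then 1 else 0 := by
  decide

lemma mulPattern {A B : Matrix (Fin 4) (Fin 4) (ZMod 2)} {σ : Fin 4 → Fin 4}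
    (hA : isE A σ) (hB : isE B rho0) : isP (A * B) (fun i => rho0 (σ i)) := by
  intro i j
  rw [Matrix.mul_apply]
  rw [Finset.sum_congr rfl fun k _ => by rw [hA i k, hB k j]]
  exact zprodE (σ i) j

lemma clash {M : Matrix (Fin 4) (Fin 4) (ZMod 2)} {σ τ : Fin 4 → Fin 4}
    (h1 : isP M σ) (h3 : isE M τ) : False := by
  obtain ⟨j, hj1, hj2⟩ := third (σ 0) (τ 0)
  have e1 := h1 0 j
  have e3 := h3 0 j
  rw [if_neg hj1] at e1
  rw [if_neg hj2] at e3
  rw [e1] at e3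
  exact absurd e3 (by decide)

end GWAux

namespace GWAux

open IsLocalRing Matrix

variable {R : Type} [CommRing R] [IsLocalRing R]

lemma conj_cancel {A B D : Matrix (Fin 4) (Fin 4) R} (hAB : A * B = 1) :
    A * (B * D * Bᵀ) * Aᵀ = D := by
  have h1 : A * (B * D * Bᵀ) * Aᵀ = (A * B) * (D * (Bᵀ * Aᵀ)) := by
    simp only [Matrix.mul_assoc]
  rw [h1, hAB, one_mul, ← Matrix.transpose_mul, hAB, Matrix.transpose_one, mul_one]

lemma elimStep (f : R →+* ZMod 2) (hf : ∀ x : R, f x = 0 ↔ x ∈ maximalIdeal R)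
    (i j : Fin 4) (hij : i ≠ j) (P : Matrix (Fin 4) (Fin 4) R) (d b : Fin 4 → Rˣ)
    (hPd : ∀ l, IsUnit (P l l)) (hPo : ∀ l m, l ≠ m → P l m ∈ maximalIdeal R)
    (hP : P * Matrix.diagonal (fun k => (d k : R)) * Pᵀ
      = Matrix.diagonal (fun k => (b k : R))) :
    ∃ (P' : Matrix (Fin 4) (Fin 4) R) (d' : Fin 4 → Rˣ),
      (∀ l, IsUnit (P' l l)) ∧ (∀ l m, l ≠ m → P' l m ∈ maximalIdeal R) ∧
      (P' * Matrix.diagonal (fun k => (d' k : R)) * P'ᵀ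
        = Matrix.diagonal (fun k => (b k : R))) ∧
      P' i j = 0 ∧
      (∀ l m, m ≠ i → m ≠ j → P' l m = P l m) ∧
      (∀ l, P l i = 0 → P l j = 0 → P' l i = 0 ∧ P' l j = 0) ∧
      ((∑ k, gen (d k)) - (∑ k, gen (d' k)) ∈ AddSubgroup.closure (rel1 R)) := by
  have funit := isUnit_iff_f f hf
  obtain ⟨U, hU⟩ := hPd i
  set β : R := P i j * (↑U⁻¹ : R) with hβ
  have hβm : β ∈ maximalIdeal R := Ideal.mul_mem_right _ _ (hPo i j hij)
  have hfβ : f β = 0 := (hf β).mpr hβm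
  set r : R := -(β * ((d j : R)) * ((↑(d i)⁻¹ : R))) with hr
  have hrm : r ∈ maximalIdeal R := by
    rw [hr]
    exact neg_mem (Ideal.mul_mem_right _ _ (Ideal.mul_mem_right _ _ hβm))
  have hfr : f r = 0 := (hf r).mpr hrm
  have hcross : 1 * r * ((d i : R)) + β * 1 * ((d j : R)) = 0 := by
    rw [hr]
    linear_combination (-(β * ((d j : R)))) * Units.inv_mul (d i)
  have hδu : IsUnit (1 * 1 - β * r) := by
    apply (funit _).mpr
    rw [_root_.map_sub, _root_.map_mul, _root_.map_mul, _root_.map_one, hfβ]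
    simp
  obtain ⟨E, hE⟩ := hδu
  have he : (1 * 1 - β * r) * ((↑E⁻¹ : R)) = 1 := by
    rw [← hE]
    exact Units.mul_inv E
  set e : R := (↑E⁻¹ : R) with he'
  have hfe : f e = 1 := by
    have h1 := congrArg f he
    rw [_root_.map_mul, _root_.map_one, _root_.map_sub, _root_.map_mul, _root_.map_mul, _root_.map_one, hfβ] at h1
    simpa using h1
  have hNB : bmove i j (1 * e) (-(β * e)) (-(r * e)) (1 * e) * bmove i j 1 β r 1 = 1 :=
    bmove_mul i j hij 1 β r 1 e (by linear_combination he)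
  have hdiu : IsUnit ((d i : R) + β ^ 2 * (d j : R)) := by
    apply (funit _).mpr
    rw [_root_.map_add, _root_.map_mul, _root_.map_pow, hfβ, (funit _).mp (d i).isUnit]
    norm_num
  obtain ⟨Ui, hUi⟩ := hdiu
  have hdju : IsUnit ((d j : R) + r ^ 2 * (d i : R)) := by
    apply (funit _).mpr
    rw [_root_.map_add, _root_.map_mul, _root_.map_pow, hfr, (funit _).mp (d j).isUnit]
    norm_num
  obtain ⟨Uj, hUj⟩ := hdju
  set d' : Fin 4 → Rˣ := fun k => if k = i then Ui else if k = j then Uj else d k with hd'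
  have hd'i : d' i = Ui := by simp [hd']
  have hd'j : d' j = Uj := by simp [hd', hij.symm]
  have hd'o : ∀ k, k ≠ i → k ≠ j → d' k = d k := fun k h1 h2 => by simp [hd', h1, h2]
  have hgB : bmove i j 1 β r 1 * Matrix.diagonal (fun k => (d k : R)) *
      (bmove i j 1 β r 1)ᵀ = Matrix.diagonal (fun k => (d' k : R)) := by
    refine bmove_gram i j hij 1 β r 1 _ _ hcross ?_ ?_ ?_
    · rw [hd'i, hUi]; ring
    · rw [hd'j, hUj]; ring
    · intro k h1 h2; rw [hd'o k h1 h2]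
  have hgN : bmove i j (1 * e) (-(β * e)) (-(r * e)) (1 * e) *
      Matrix.diagonal (fun k => (d' k : R)) *
      (bmove i j (1 * e) (-(β * e)) (-(r * e)) (1 * e))ᵀ
      = Matrix.diagonal (fun k => (d k : R)) := by
    rw [← hgB]
    exact conj_cancel hNB
  set N := bmove i j (1 * e) (-(β * e)) (-(r * e)) (1 * e) with hN
  set P' := P * N with hP'
  have hNcol : ∀ x m, m ≠ i → m ≠ j → P' x m = P x m := by
    intro x m h1 h2
    rw [hP', Matrix.mul_apply]
    rw [sum4_support1 (i := m) (fun k hk => ?_), hN,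
      bmove_row_other i j _ _ _ _ h1 h2, if_pos rfl, mul_one]
    rcases eq_or_ne i k with rfl | hki
    · rw [hN, bmove_row_i, if_neg h1, if_neg h2, mul_zero]
    · rcases eq_or_ne j k with rfl | hkj
      · rw [hN, bmove_row_j i j hij, if_neg h1, if_neg h2, mul_zero]
      · rw [hN, bmove_row_other i j _ _ _ _ (Ne.symm hki) (Ne.symm hkj),
          if_neg fun hh => hk hh.symm, mul_zero]
  have hcoli : ∀ x, P' x i = P x i * (1 * e) + P x j * (-(r * e)) := by
    intro x
    rw [hP', Matrix.mul_apply]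
    rw [sum4_support2 hij (fun k hk1 hk2 => by
      rw [hN, bmove_row_other i j _ _ _ _ hk1 hk2, if_neg (Ne.symm hk1), mul_zero])]
    rw [hN, bmove_ii, bmove_ji i j hij]
  have hcolj : ∀ x, P' x j = P x i * (-(β * e)) + P x j * (1 * e) := by
    intro x
    rw [hP', Matrix.mul_apply]
    rw [sum4_support2 hij (fun k hk1 hk2 => by
      rw [hN, bmove_row_other i j _ _ _ _ hk1 hk2, if_neg (Ne.symm hk2), mul_zero])]
    rw [hN, bmove_ij i j hij, bmove_jj i j hij]
  have hfP : ∀ l, f (P l l) = 1 := fun l => (funit _).mp (hPd l)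
  have hfPo : ∀ l m, l ≠ m → f (P l m) = 0 := fun l m hlm => (hf _).mpr (hPo l m hlm)
  refine ⟨P', d', ?_, ?_, ?_, ?_, hNcol, ?_, ?_⟩
  · -- diagonal entries are units
    intro l
    rcases eq_or_ne i l with rfl | hli
    · apply (funit _).mpr
      rw [hcoli i, _root_.map_add, _root_.map_mul, _root_.map_mul, _root_.map_mul, _root_.map_one, _root_.map_neg, _root_.map_mul, hfe, hfr,
        hfP i, hfPo i j hij]
      norm_num
    · rcases eq_or_ne j l with rfl | hlj
      · apply (funit _).mpr
        rw [hcolj j, _root_.map_add, _root_.map_mul, _root_.map_mul, _root_.map_mul, _root_.map_one, _root_.map_neg, _root_.map_mul, hfe, hfβ,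
          hfP j, hfPo j i hij.symm]
        norm_num
      · rw [hNcol l l (Ne.symm hli) (Ne.symm hlj)]
        exact hPd l
  · -- off-diagonal entries are in the maximal ideal
    intro l m hlm
    rcases eq_or_ne i m with rfl | hmi
    · apply (hf _).mp
      rw [hcoli l, _root_.map_add, _root_.map_mul, _root_.map_mul, _root_.map_mul, _root_.map_one, _root_.map_neg, _root_.map_mul, hfe, hfr,
        hfPo l i hlm]
      norm_num
    · rcases eq_or_ne j m with rfl | hmj
      · apply (hf _).mp
        rw [hcolj l, _root_.map_add, _root_.map_mul, _root_.map_mul, _root_.map_mul, _root_.map_one, _root_.map_neg, _root_.map_mul, hfe, hfβ,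
          hfPo l j hlm]
        norm_num
      · rw [hNcol l m (Ne.symm hmi) (Ne.symm hmj)]
        exact hPo l m hlm
  · -- the Gram identity
    have h1 : P' * Matrix.diagonal (fun k => (d' k : R)) * P'ᵀ
        = P * (N * Matrix.diagonal (fun k => (d' k : R)) * Nᵀ) * Pᵀ := by
      rw [hP']
      simp only [Matrix.transpose_mul, Matrix.mul_assoc]
    rw [h1, hgN, hP]
  · -- the (i,j) entry vanishes
    rw [hcolj i, ← hU, hβ]
    linear_combination (-(P i j * e)) * Units.mul_inv U
  · -- zero preservation
    intro l h0i h0j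
    constructor
    · rw [hcoli l, h0i, h0j]; ring
    · rw [hcolj l, h0i, h0j]; ring
  · -- the difference is in the closure
    have hsplit : (∑ k, gen (d k)) - (∑ k, gen (d' k))
        = (gen (d i) + gen (d j)) - (gen (d' i) + gen (d' j)) := by
      rw [← Finset.sum_sub_distrib]
      rw [sum4_support2 hij (fun k hk1 hk2 => by rw [hd'o k hk1 hk2, sub_self])]
      abel
    rw [hsplit, hd'i, hd'j]
    apply AddSubgroup.subset_closure
    refine ⟨d i, d j, Ui, Uj, r, β, hrm, hβm, ?_, ?_, ?_, rfl⟩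
    · linear_combination hcross
    · exact hUi
    · exact hUj

end GWAux

namespace GWAux

open IsLocalRing Matrix

variable {R : Type} [CommRing R] [IsLocalRing R]

lemma chainCase (f : R →+* ZMod 2) (hf : ∀ x : R, f x = 0 ↔ x ∈ maximalIdeal R)
    (P : Matrix (Fin 4) (Fin 4) R) (d b : Fin 4 → Rˣ)
    (hPd : ∀ l, IsUnit (P l l)) (hPo : ∀ l m, l ≠ m → P l m ∈ maximalIdeal R)
    (hP : P * Matrix.diagonal (fun k => (d k : R)) * Pᵀ
      = Matrix.diagonal (fun k => (b k : R))) :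
    (∑ k, gen (d k)) - (∑ k, gen (b k)) ∈ AddSubgroup.closure (rel1 R) := by
  obtain ⟨Q1, e1, u1, o1, g1, z1, unch1, zp1, cl1⟩ :=
    elimStep f hf 0 1 (by decide) P d b hPd hPo hP
  obtain ⟨Q2, e2, u2, o2, g2, z2, unch2, zp2, cl2⟩ :=
    elimStep f hf 0 2 (by decide) Q1 e1 b u1 o1 g1
  have z2a : Q2 0 1 = 0 := by rw [unch2 0 1 (by decide) (by decide)]; exact z1
  obtain ⟨Q3, e3, u3, o3, g3, z3, unch3, zp3, cl3⟩ :=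
    elimStep f hf 0 3 (by decide) Q2 e2 b u2 o2 g2
  have z3a : Q3 0 1 = 0 := by rw [unch3 0 1 (by decide) (by decide)]; exact z2a
  have z3b : Q3 0 2 = 0 := by rw [unch3 0 2 (by decide) (by decide)]; exact z2
  have col3 : ∀ l : Fin 4, l ≠ 0 → Q3 l 0 = 0 := by
    intro l hl
    have hg := gram_entries g3 l 0
    rw [Fin.sum_univ_four, z3a, z3b, z3, Matrix.diagonal_apply_ne _ hl] at hg
    simp only [mul_zero, add_zero] at hg
    exact (((e3 0).isUnit.mul (u3 0)).mul_left_eq_zero).mp hg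
  obtain ⟨Q4, e4, u4, o4, g4, z4, unch4, zp4, cl4⟩ :=
    elimStep f hf 1 2 (by decide) Q3 e3 b u3 o3 g3
  have z4a : Q4 0 1 = 0 := (zp4 0 z3a z3b).1
  have z4b : Q4 0 2 = 0 := (zp4 0 z3a z3b).2
  have z4c : Q4 0 3 = 0 := by rw [unch4 0 3 (by decide) (by decide)]; exact z3
  have col4 : ∀ l : Fin 4, l ≠ 0 → Q4 l 0 = 0 := fun l hl => by
    rw [unch4 l 0 (by decide) (by decide)]; exact col3 l hl
  obtain ⟨Q5, e5, u5, o5, g5, z5, unch5, zp5, cl5⟩ :=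
    elimStep f hf 1 3 (by decide) Q4 e4 b u4 o4 g4
  have z5a : Q5 0 1 = 0 := (zp5 0 z4a z4c).1
  have z5c : Q5 0 3 = 0 := (zp5 0 z4a z4c).2
  have z5b : Q5 0 2 = 0 := by rw [unch5 0 2 (by decide) (by decide)]; exact z4b
  have z5d : Q5 1 2 = 0 := by rw [unch5 1 2 (by decide) (by decide)]; exact z4
  have col5 : ∀ l : Fin 4, l ≠ 0 → Q5 l 0 = 0 := fun l hl => by
    rw [unch5 l 0 (by decide) (by decide)]; exact col4 l hl
  have col5' : ∀ l : Fin 4, l ≠ 1 → Q5 l 1 = 0 ∨ l = 0 := by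
    intro l hl
    by_cases hl0 : l = 0
    · exact Or.inr hl0
    left
    have hg := gram_entries g5 l 1
    rw [Fin.sum_univ_four, col5 1 (by decide), z5d, z5, Matrix.diagonal_apply_ne _ hl] at hg
    simp only [mul_zero, add_zero, zero_add] at hg
    exact (((e5 1).isUnit.mul (u5 1)).mul_left_eq_zero).mp hg
  have c52 : Q5 2 1 = 0 := by rcases col5' 2 (by decide) with h | h; exact h; exact absurd h (by decide)
  have c53 : Q5 3 1 = 0 := by rcases col5' 3 (by decide) with h | h; exact h; exact absurd h (by decide)
  obtain ⟨Q6, e6, u6, o6, g6, z6, unch6, zp6, cl6⟩ :=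
    elimStep f hf 2 3 (by decide) Q5 e5 b u5 o5 g5
  have y02 : Q6 0 2 = 0 := (zp6 0 z5b z5c).1
  have y03 : Q6 0 3 = 0 := (zp6 0 z5b z5c).2
  have y12 : Q6 1 2 = 0 := (zp6 1 z5d z5).1
  have y13 : Q6 1 3 = 0 := (zp6 1 z5d z5).2
  have y01 : Q6 0 1 = 0 := by rw [unch6 0 1 (by decide) (by decide)]; exact z5a
  have y10 : Q6 1 0 = 0 := by rw [unch6 1 0 (by decide) (by decide)]; exact col5 1 (by decide)
  have y20 : Q6 2 0 = 0 := by rw [unch6 2 0 (by decide) (by decide)]; exact col5 2 (by decide)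
  have y30 : Q6 3 0 = 0 := by rw [unch6 3 0 (by decide) (by decide)]; exact col5 3 (by decide)
  have y21 : Q6 2 1 = 0 := by rw [unch6 2 1 (by decide) (by decide)]; exact c52
  have y31 : Q6 3 1 = 0 := by rw [unch6 3 1 (by decide) (by decide)]; exact c53
  have y23 : Q6 2 3 = 0 := z6
  have y32 : Q6 3 2 = 0 := by
    have hg := gram_entries g6 3 2
    rw [Fin.sum_univ_four, y20, y21, y23, Matrix.diagonal_apply_ne _ (by decide)] at hg
    simp only [mul_zero, add_zero, zero_add] at hg
    exact (((e6 2).isUnit.mul (u6 2)).mul_left_eq_zero).mp hg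
  have hgen : ∀ l : Fin 4, gen (b l) = gen (e6 l) := by
    intro l
    fin_cases l
    · have hg := gram_entries g6 0 0
      rw [Fin.sum_univ_four, y01, y02, y03, Matrix.diagonal_apply_eq] at hg
      simp only [mul_zero, zero_mul, add_zero, zero_add] at hg
      obtain ⟨s, hs⟩ := u6 0
      exact gen_eq_of_sq (b 0) (e6 0) s (by rw [hs]; linear_combination -hg)
    · have hg := gram_entries g6 1 1
      rw [Fin.sum_univ_four, y10, y12, y13, Matrix.diagonal_apply_eq] at hg
      simp only [mul_zero, zero_mul, add_zero, zero_add] at hg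
      obtain ⟨s, hs⟩ := u6 1
      exact gen_eq_of_sq (b 1) (e6 1) s (by rw [hs]; linear_combination -hg)
    · have hg := gram_entries g6 2 2
      rw [Fin.sum_univ_four, y20, y21, y23, Matrix.diagonal_apply_eq] at hg
      simp only [mul_zero, zero_mul, add_zero, zero_add] at hg
      obtain ⟨s, hs⟩ := u6 2
      exact gen_eq_of_sq (b 2) (e6 2) s (by rw [hs]; linear_combination -hg)
    · have hg := gram_entries g6 3 3
      rw [Fin.sum_univ_four, y30, y31, y32, Matrix.diagonal_apply_eq] at hg
      simp only [mul_zero, zero_mul, add_zero, zero_add] at hg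
      obtain ⟨s, hs⟩ := u6 3
      exact gen_eq_of_sq (b 3) (e6 3) s (by rw [hs]; linear_combination -hg)
  have hsum6 : ∑ k, gen (b k) = ∑ k, gen (e6 k) :=
    Finset.sum_congr rfl fun k _ => hgen k
  have key : (∑ k, gen (d k)) - (∑ k, gen (b k))
      = ((∑ k, gen (d k)) - (∑ k, gen (e1 k)))
      + ((∑ k, gen (e1 k)) - (∑ k, gen (e2 k)))
      + ((∑ k, gen (e2 k)) - (∑ k, gen (e3 k)))
      + ((∑ k, gen (e3 k)) - (∑ k, gen (e4 k)))
      + ((∑ k, gen (e4 k)) - (∑ k, gen (e5 k)))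
      + ((∑ k, gen (e5 k)) - (∑ k, gen (e6 k))) := by
    rw [hsum6]
    abel
  rw [key]
  exact add_mem (add_mem (add_mem (add_mem (add_mem cl1 cl2) cl3) cl4) cl5) cl6

lemma permCase (f : R →+* ZMod 2) (hf : ∀ x : R, f x = 0 ↔ x ∈ maximalIdeal R)
    (σ : Equiv.Perm (Fin 4)) (P : Matrix (Fin 4) (Fin 4) R) (d b : Fin 4 → Rˣ)
    (hPd : ∀ l, IsUnit (P l (σ l))) (hPo : ∀ l m, m ≠ σ l → P l m ∈ maximalIdeal R)
    (hP : P * Matrix.diagonal (fun k => (d k : R)) * Pᵀ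
      = Matrix.diagonal (fun k => (b k : R))) :
    (∑ k, gen (d k)) - (∑ k, gen (b k)) ∈ AddSubgroup.closure (rel1 R) := by
  set P' : Matrix (Fin 4) (Fin 4) R := Matrix.of fun x y => P x (σ y) with hP'
  have happ : ∀ x y, P' x y = P x (σ y) := fun x y => rfl
  have hgram' : P' * Matrix.diagonal (fun k => ((d (σ k) : R))) * P'ᵀ
      = Matrix.diagonal (fun k => (b k : R)) := by
    ext x y
    rw [gram_expand]
    have e1 : (∑ k, P' x k * ((d (σ k) : R) * P' y k))
        = ∑ k, (fun m => P x m * ((d m : R) * P y m)) (σ k) :=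
      Finset.sum_congr rfl fun k _ => by rw [happ, happ]
    rw [e1, Equiv.sum_comp σ (fun m => P x m * ((d m : R) * P y m))]
    exact gram_entries hP x y
  have hchain := chainCase f hf P' (fun k => d (σ k)) b
    (fun l => by rw [happ]; exact hPd l)
    (fun l m hlm => by
      rw [happ]
      exact hPo l (σ m) fun h => hlm (σ.injective h.symm))
    hgram'
  have hsum : ∑ k, gen (d (σ k)) = ∑ k, gen (d k) :=
    Equiv.sum_comp σ (fun m => gen (d m))
  rw [← hsum]
  exact hchain

end GWAux

namespace GWAux

open IsLocalRing Matrix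

variable {R : Type} [CommRing R] [IsLocalRing R]

set_option linter.unusedSectionVars false

lemma vec4_zero {α : Type*} (a b c d : α) : (![a, b, c, d]) 0 = a := rfl
lemma vec4_one {α : Type*} (a b c d : α) : (![a, b, c, d]) 1 = b := rfl
lemma vec4_two {α : Type*} (a b c d : α) : (![a, b, c, d]) 2 = c := rfl
lemma vec4_three {α : Type*} (a b c d : α) : (![a, b, c, d]) 3 = d := rfl

lemma mat4_ext {α : Type*} {M N : Matrix (Fin 4) (Fin 4) α}
    (h00 : M 0 0 = N 0 0) (h01 : M 0 1 = N 0 1) (h02 : M 0 2 = N 0 2) (h03 : M 0 3 = N 0 3)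
    (h10 : M 1 0 = N 1 0) (h11 : M 1 1 = N 1 1) (h12 : M 1 2 = N 1 2) (h13 : M 1 3 = N 1 3)
    (h20 : M 2 0 = N 2 0) (h21 : M 2 1 = N 2 1) (h22 : M 2 2 = N 2 2) (h23 : M 2 3 = N 2 3)
    (h30 : M 3 0 = N 3 0) (h31 : M 3 1 = N 3 1) (h32 : M 3 2 = N 3 2) (h33 : M 3 3 = N 3 3) :
    M = N := by
  ext x y
  fin_cases x <;> fin_cases y
  exacts [h00, h01, h02, h03, h10, h11, h12, h13, h20, h21, h22, h23, h30, h31, h32, h33]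

/-- The explicit congruence matrix realizing relation (2). -/
def bigP (A B C D Ai Bi Ci Di : R) : Matrix (Fin 4) (Fin 4) R :=
  !![1, 0, Ci, Di;
     Ai, Bi, 0, -1;
     1, -1, -A, 0;
     A * C - B * D,
       -(1 + A * D) * (A * C - B * D) - D * (A + B + A * B * D),
       A + B + A * B * D,
       -A * (A * C - B * D) - (A + B + A * B * D)]

def bigT (A B C D : R) : R :=
  A * (A * C - B * D) ^ 2
    + B * (-(1 + A * D) * (A * C - B * D) - D * (A + B + A * B * D)) ^ 2
    + C * (A + B + A * B * D) ^ 2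
    + D * (-A * (A * C - B * D) - (A + B + A * B * D)) ^ 2

lemma bigP_00 (A B C D Ai Bi Ci Di : R) :
    bigP A B C D Ai Bi Ci Di 0 0 = 1 := rfl

lemma bigP_01 (A B C D Ai Bi Ci Di : R) :
    bigP A B C D Ai Bi Ci Di 0 1 = 0 := rfl

lemma bigP_02 (A B C D Ai Bi Ci Di : R) :
    bigP A B C D Ai Bi Ci Di 0 2 = Ci := rfl

lemma bigP_03 (A B C D Ai Bi Ci Di : R) :
    bigP A B C D Ai Bi Ci Di 0 3 = Di := rfl

lemma bigP_10 (A B C D Ai Bi Ci Di : R) :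
    bigP A B C D Ai Bi Ci Di 1 0 = Ai := rfl

lemma bigP_11 (A B C D Ai Bi Ci Di : R) :
    bigP A B C D Ai Bi Ci Di 1 1 = Bi := rfl

lemma bigP_12 (A B C D Ai Bi Ci Di : R) :
    bigP A B C D Ai Bi Ci Di 1 2 = 0 := rfl

lemma bigP_13 (A B C D Ai Bi Ci Di : R) :
    bigP A B C D Ai Bi Ci Di 1 3 = -1 := rfl

lemma bigP_20 (A B C D Ai Bi Ci Di : R) :
    bigP A B C D Ai Bi Ci Di 2 0 = 1 := rfl

lemma bigP_21 (A B C D Ai Bi Ci Di : R) :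
    bigP A B C D Ai Bi Ci Di 2 1 = -1 := rfl

lemma bigP_22 (A B C D Ai Bi Ci Di : R) :
    bigP A B C D Ai Bi Ci Di 2 2 = -A := rfl

lemma bigP_23 (A B C D Ai Bi Ci Di : R) :
    bigP A B C D Ai Bi Ci Di 2 3 = 0 := rfl

lemma bigP_30 (A B C D Ai Bi Ci Di : R) :
    bigP A B C D Ai Bi Ci Di 3 0 = A * C - B * D := rfl

lemma bigP_31 (A B C D Ai Bi Ci Di : R) :
    bigP A B C D Ai Bi Ci Di 3 1 = -(1 + A * D) * (A * C - B * D) - D * (A + B + A * B * D) := rfl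

lemma bigP_32 (A B C D Ai Bi Ci Di : R) :
    bigP A B C D Ai Bi Ci Di 3 2 = A + B + A * B * D := rfl

lemma bigP_33 (A B C D Ai Bi Ci Di : R) :
    bigP A B C D Ai Bi Ci Di 3 3 = -A * (A * C - B * D) - (A + B + A * B * D) := rfl

lemma big_gram (A B C D Ai Bi Ci Di : R) (hA : A * Ai = 1) (hB : B * Bi = 1)
    (hC : C * Ci = 1) (hD : D * Di = 1) :
    bigP A B C D Ai Bi Ci Di * Matrix.diagonal ![A, B, C, D] *
      (bigP A B C D Ai Bi Ci Di)ᵀ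
      = Matrix.diagonal ![A + Ci + Di, Ai + Bi + D, A + B + A ^ 2 * C, bigT A B C D] := by
  apply mat4_ext <;>
    rw [gram_expand, Fin.sum_univ_four] <;>
    simp only [bigP_00, bigP_01, bigP_02, bigP_03, bigP_10, bigP_11, bigP_12, bigP_13, bigP_20, bigP_21, bigP_22, bigP_23, bigP_30, bigP_31, bigP_32, bigP_33, vec4_zero, vec4_one, vec4_two, vec4_three]

  · rw [Matrix.diagonal_apply_eq, vec4_zero]
    linear_combination Ci * hC + Di * hD
  · rw [Matrix.diagonal_apply_ne _ (by decide)]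
    linear_combination hA - hD
  · rw [Matrix.diagonal_apply_ne _ (by decide)]
    linear_combination (-A) * hC
  · rw [Matrix.diagonal_apply_ne _ (by decide)]
    linear_combination (B + A + A * B * D) * hC + (-B - A - A ^ 2 * C) * hD
  · rw [Matrix.diagonal_apply_ne _ (by decide)]
    linear_combination hA - hD
  · rw [Matrix.diagonal_apply_eq, vec4_one]
    linear_combination Ai * hA + Bi * hB
  · rw [Matrix.diagonal_apply_ne _ (by decide)]
    linear_combination hA - hB
  · rw [Matrix.diagonal_apply_ne _ (by decide)]
    linear_combination (-B * D + A * C) * hA + (-(A * D) - A * C - A ^ 2 * C * D) * hB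
  · rw [Matrix.diagonal_apply_ne _ (by decide)]
    linear_combination (-A) * hC
  · rw [Matrix.diagonal_apply_ne _ (by decide)]
    linear_combination hA - hB
  · rw [Matrix.diagonal_apply_eq, vec4_two]
    ring
  · rw [Matrix.diagonal_apply_ne _ (by decide)]
    ring
  · rw [Matrix.diagonal_apply_ne _ (by decide)]
    linear_combination (B + A + A * B * D) * hC + (-B - A - A ^ 2 * C) * hD
  · rw [Matrix.diagonal_apply_ne _ (by decide)]
    linear_combination (-B * D + A * C) * hA + (-(A * D) - A * C - A ^ 2 * C * D) * hB
  · rw [Matrix.diagonal_apply_ne _ (by decide)]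
    ring
  · rw [Matrix.diagonal_apply_eq, vec4_three]
    rw [bigT]; ring


def EE : Matrix (Fin 4) (Fin 4) (ZMod 2) := !![1, 0, 1, 1; 1, 1, 0, 1; 1, 1, 1, 0; 0, 1, 1, 1]

lemma EE_isE : isE EE rho0 := by unfold isE; intro i j; fin_cases i <;> fin_cases j <;> rfl

lemma EE_orth : EE * EEᵀ = 1 := by decide

lemma EE_det : EE.det = 1 := by
  have h1 := Matrix.det_mul EE EEᵀ
  rw [EE_orth, Matrix.det_one, Matrix.det_transpose] at h1
  have h2 : ∀ z : ZMod 2, 1 = z * z → z = 1 := by decide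
  exact h2 _ h1

lemma big_map (f : R →+* ZMod 2) (A B C D Ai Bi Ci Di : R)
    (ha : f A = 1) (hb : f B = 1) (hc : f C = 1) (hd : f D = 1)
    (hai : f Ai = 1) (hbi : f Bi = 1) (hci : f Ci = 1) (hdi : f Di = 1) :
    (bigP A B C D Ai Bi Ci Di).map f = EE := by
  apply mat4_ext <;>
    rw [Matrix.map_apply] <;>
    simp only [bigP_00, bigP_01, bigP_02, bigP_03, bigP_10, bigP_11, bigP_12, bigP_13, bigP_20, bigP_21, bigP_22, bigP_23, bigP_30, bigP_31, bigP_32, bigP_33, _root_.map_add, _root_.map_mul, _root_.map_sub,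
      _root_.map_neg, _root_.map_pow, _root_.map_one, _root_.map_zero,
      ha, hb, hc, hd, hai, hbi, hci, hdi] <;>
    decide

end GWAux

namespace GWAux

open IsLocalRing Matrix

variable {R : Type} [CommRing R] [IsLocalRing R]

set_option linter.unusedSectionVars false

lemma bigMove (f : R →+* ZMod 2) (hf : ∀ x : R, f x = 0 ↔ x ∈ maximalIdeal R)
    (a b c d : Rˣ) :
    ∃ (U V W T : Rˣ),
      (U : R) = (a : R) + ((c⁻¹ : Rˣ) : R) + ((d⁻¹ : Rˣ) : R) ∧
      (V : R) = ((a⁻¹ : Rˣ) : R) + ((b⁻¹ : Rˣ) : R) + (d : R) ∧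
      (W : R) = (a : R) + (b : R) + (a : R) ^ 2 * (c : R) ∧
      gen T = gen (a * b * c * d * (U * V * W)) ∧
      ∃ M : Matrix (Fin 4) (Fin 4) R,
        IsUnit M.det ∧
        M.map f = EE ∧
        M * Matrix.diagonal (fun k => ((![a, b, c, d] : Fin 4 → Rˣ) k : R)) * Mᵀ
          = Matrix.diagonal (fun k => ((![U, V, W, T] : Fin 4 → Rˣ) k : R)) := by
  have funit := isUnit_iff_f f hf
  have hfa : f (a : R) = 1 := (funit _).mp a.isUnit
  have hfb : f (b : R) = 1 := (funit _).mp b.isUnit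
  have hfc : f (c : R) = 1 := (funit _).mp c.isUnit
  have hfd : f (d : R) = 1 := (funit _).mp d.isUnit
  have hfai : f ((a⁻¹ : Rˣ) : R) = 1 := (funit _).mp (a⁻¹).isUnit
  have hfbi : f ((b⁻¹ : Rˣ) : R) = 1 := (funit _).mp (b⁻¹).isUnit
  have hfci : f ((c⁻¹ : Rˣ) : R) = 1 := (funit _).mp (c⁻¹).isUnit
  have hfdi : f ((d⁻¹ : Rˣ) : R) = 1 := (funit _).mp (d⁻¹).isUnit
  obtain ⟨U, hU⟩ : IsUnit ((a : R) + ((c⁻¹ : Rˣ) : R) + ((d⁻¹ : Rˣ) : R)) := by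
    apply (funit _).mpr
    rw [_root_.map_add, _root_.map_add, hfa, hfci, hfdi]
    decide
  obtain ⟨V, hV⟩ : IsUnit (((a⁻¹ : Rˣ) : R) + ((b⁻¹ : Rˣ) : R) + (d : R)) := by
    apply (funit _).mpr
    rw [_root_.map_add, _root_.map_add, hfai, hfbi, hfd]
    decide
  obtain ⟨W, hW⟩ : IsUnit ((a : R) + (b : R) + (a : R) ^ 2 * (c : R)) := by
    apply (funit _).mpr
    rw [_root_.map_add, _root_.map_add, _root_.map_mul, _root_.map_pow, hfa, hfb, hfc]
    decide
  obtain ⟨T, hT⟩ : IsUnit (bigT (a : R) (b : R) (c : R) (d : R)) := by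
    apply (funit _).mpr
    simp only [bigT, _root_.map_add, _root_.map_mul, _root_.map_sub, _root_.map_neg,
      _root_.map_pow, _root_.map_one, hfa, hfb, hfc, hfd]
    decide
  have hgram := big_gram (a : R) (b : R) (c : R) (d : R)
    ((a⁻¹ : Rˣ) : R) ((b⁻¹ : Rˣ) : R) ((c⁻¹ : Rˣ) : R) ((d⁻¹ : Rˣ) : R)
    (Units.mul_inv a) (Units.mul_inv b) (Units.mul_inv c) (Units.mul_inv d)
  have hmap := big_map f (a : R) (b : R) (c : R) (d : R)
    ((a⁻¹ : Rˣ) : R) ((b⁻¹ : Rˣ) : R) ((c⁻¹ : Rˣ) : R) ((d⁻¹ : Rˣ) : R)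
    hfa hfb hfc hfd hfai hfbi hfci hfdi
  set M := bigP (a : R) (b : R) (c : R) (d : R)
    ((a⁻¹ : Rˣ) : R) ((b⁻¹ : Rˣ) : R) ((c⁻¹ : Rˣ) : R) ((d⁻¹ : Rˣ) : R) with hM
  have hdet : IsUnit M.det := by
    apply (funit _).mpr
    rw [RingHom.map_det, RingHom.mapMatrix_apply, hmap, EE_det]
  have hveca : (fun k => ((![a, b, c, d] : Fin 4 → Rˣ) k : R)) = ![(a : R), b, c, d] := by
    funext k
    fin_cases k <;> rfl
  have hvecu : (fun k => ((![U, V, W, T] : Fin 4 → Rˣ) k : R))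
      = ![(a : R) + ((c⁻¹ : Rˣ) : R) + ((d⁻¹ : Rˣ) : R),
          ((a⁻¹ : Rˣ) : R) + ((b⁻¹ : Rˣ) : R) + (d : R),
          (a : R) + (b : R) + (a : R) ^ 2 * (c : R),
          bigT (a : R) (b : R) (c : R) (d : R)] := by
    funext k
    fin_cases k
    · exact hU
    · exact hV
    · exact hW
    · exact hT
  have hgram' : M * Matrix.diagonal (fun k => ((![a, b, c, d] : Fin 4 → Rˣ) k : R)) * Mᵀ
      = Matrix.diagonal (fun k => ((![U, V, W, T] : Fin 4 → Rˣ) k : R)) := by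
    rw [hveca, hvecu, hM]
    exact hgram
  -- square class of T
  have hdet' := hdet
  obtain ⟨Dp, hDp⟩ := hdet'
  have hdetgram := congrArg Matrix.det hgram'
  rw [Matrix.det_mul, Matrix.det_mul, Matrix.det_transpose, Matrix.det_diagonal,
    Matrix.det_diagonal, Fin.prod_univ_four, Fin.prod_univ_four] at hdetgram
  simp only [vec4_zero, vec4_one, vec4_two, vec4_three] at hdetgram
  have hgenT : gen T = gen (a * b * c * d * (U * V * W)) := by
    have hunit : T * (a * b * c * d * (U * V * W)) = (Dp * (a * b * c * d)) ^ 2 := by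
      apply Units.ext
      push_cast
      rw [← hDp] at hdetgram
      linear_combination (-((a : R) * b * c * d)) * hdetgram
    have h3 : (a * b * c * d * (U * V * W))⁻¹ * (T * (a * b * c * d * (U * V * W))) = T := by
      rw [mul_comm T, inv_mul_cancel_left]
    rw [hunit] at h3
    calc gen T = gen ((a * b * c * d * (U * V * W))⁻¹ * (Dp * (a * b * c * d)) ^ 2) := by
          rw [h3]
      _ = gen ((a * b * c * d * (U * V * W))⁻¹) := gen_sq _ _
      _ = gen (a * b * c * d * (U * V * W)) := gen_inv _
  exact ⟨U, V, W, T, hU, hV, hW, hgenT, M, hdet, hmap, hgram'⟩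

lemma easy1 (f : R →+* ZMod 2) (hf : ∀ x : R, f x = 0 ↔ x ∈ maximalIdeal R) :
    rel1 R ⊆ gwRel R := by
  rintro x ⟨a, b, a', b', m, n, hm, hn, hc, ha', hb', rfl⟩
  have funit := isUnit_iff_f f hf
  refine ⟨![a, b, 1, 1], ![a', b', 1, 1], bmove 0 1 1 n m 1, ?_, ?_, ?_⟩
  · apply (funit _).mpr
    rw [RingHom.map_det, RingHom.mapMatrix_apply, bmove_map,
      (hf n).mpr hn, (hf m).mpr hm, _root_.map_one]
    have hone : bmove (0 : Fin 4) 1 (1 : ZMod 2) 0 0 1 = 1 := by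
      ext x y
      rcases eq_or_ne (0 : Fin 4) x with rfl | hx0
      · rw [bmove_row_i]
        by_cases hy : y = 0
        · rw [if_pos hy, hy, Matrix.one_apply_eq]
        · rw [if_neg hy]
          by_cases hy1 : y = 1
          · rw [if_pos hy1, hy1, Matrix.one_apply_ne (by decide)]
          · rw [if_neg hy1, Matrix.one_apply_ne fun h => hy h.symm]
      · rcases eq_or_ne (1 : Fin 4) x with rfl | hx1
        · rw [bmove_row_j 0 1 (by decide)]
          by_cases hy : y = 0
          · rw [if_pos hy, hy, Matrix.one_apply_ne (by decide)]
          · rw [if_neg hy]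
            by_cases hy1 : y = 1
            · rw [if_pos hy1, hy1, Matrix.one_apply_eq]
            · rw [if_neg hy1, Matrix.one_apply_ne fun h => hy1 h.symm]
        · rw [bmove_row_other 0 1 _ _ _ _ (Ne.symm hx0) (Ne.symm hx1)]
          by_cases hxy : y = x
          · rw [if_pos hxy, hxy, Matrix.one_apply_eq]
          · rw [if_neg hxy, Matrix.one_apply_ne fun h => hxy h.symm]
    rw [hone, Matrix.det_one]
  · refine bmove_gram 0 1 (by decide) 1 n m 1 _ _ ?_ ?_ ?_ ?_
    · show 1 * m * ((![a, b, 1, 1] : Fin 4 → Rˣ) 0 : R)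
        + n * 1 * ((![a, b, 1, 1] : Fin 4 → Rˣ) 1 : R) = 0
      rw [vec4_zero, vec4_one]
      linear_combination hc
    · show ((![a', b', 1, 1] : Fin 4 → Rˣ) 0 : R)
        = 1 ^ 2 * ((![a, b, 1, 1] : Fin 4 → Rˣ) 0 : R)
          + n ^ 2 * ((![a, b, 1, 1] : Fin 4 → Rˣ) 1 : R)
      rw [vec4_zero, vec4_zero, vec4_one]
      linear_combination ha'
    · show ((![a', b', 1, 1] : Fin 4 → Rˣ) 1 : R)
        = m ^ 2 * ((![a, b, 1, 1] : Fin 4 → Rˣ) 0 : R)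
          + 1 ^ 2 * ((![a, b, 1, 1] : Fin 4 → Rˣ) 1 : R)
      rw [vec4_one, vec4_zero, vec4_one]
      linear_combination hb'
    · intro k h1 h2
      fin_cases k
      · exact absurd rfl h1
      · exact absurd rfl h2
      · rfl
      · rfl
  · rw [Fin.sum_univ_four, Fin.sum_univ_four]
    show (gen a + gen b) - (gen a' + gen b')
      = (gen a + gen b + gen 1 + gen 1) - (gen a' + gen b' + gen 1 + gen 1)
    abel

lemma easy2 (f : R →+* ZMod 2) (hf : ∀ x : R, f x = 0 ↔ x ∈ maximalIdeal R) :
    rel2 R ⊆ gwRel R := by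
  rintro x ⟨a, b, c, d, u, v, w, hu, hv, hw, rfl⟩
  obtain ⟨U, V, W, T, hU, hV, hW, hgenT, M, hdet, hmap, hgram⟩ := bigMove f hf a b c d
  have hUu : U = u := Units.ext (hU.trans hu.symm)
  have hVv : V = v := Units.ext (hV.trans hv.symm)
  have hWw : W = w := Units.ext (hW.trans hw.symm)
  rw [hUu, hVv, hWw] at hgram hgenT
  refine ⟨![a, b, c, d], ![u, v, w, T], M, hdet, hgram, ?_⟩
  rw [Fin.sum_univ_four, Fin.sum_univ_four]
  show (gen a + gen b + gen c + gen d)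
      - (gen u + gen v + gen w + gen (a * b * c * d * (u * v * w)))
    = (gen a + gen b + gen c + gen d) - (gen u + gen v + gen w + gen T)
  rw [hgenT]

lemma hard (f : R →+* ZMod 2) (hf : ∀ x : R, f x = 0 ↔ x ∈ maximalIdeal R) :
    ∀ x ∈ gwRel R, x ∈ AddSubgroup.closure (rel1 R ∪ rel2 R) := by
  rintro x ⟨a, b, P, hdet, hP, rfl⟩
  have funit := isUnit_iff_f f hf
  have hDa : (Matrix.diagonal (fun i => ((a i : R)))).map f = 1 := by
    rw [Matrix.diagonal_map (_root_.map_zero f)]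
    have h1 : (fun i => f ((a i : R))) = fun _ => (1 : ZMod 2) :=
      funext fun i => (funit _).mp (a i).isUnit
    rw [h1, Matrix.diagonal_one]
  have hDb : (Matrix.diagonal (fun i => ((b i : R)))).map f = 1 := by
    rw [Matrix.diagonal_map (_root_.map_zero f)]
    have h1 : (fun i => f ((b i : R))) = fun _ => (1 : ZMod 2) :=
      funext fun i => (funit _).mp (b i).isUnit
    rw [h1, Matrix.diagonal_one]
  have hPbar : (P.map f) * (P.map f)ᵀ = 1 := by
    have h1 := congrArg (fun N => N.map f) hP
    simp only [Matrix.map_mul, Matrix.transpose_map] at h1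
    rw [hDa, hDb, Matrix.mul_one] at h1
    exact h1
  obtain ⟨σ, hσbij, hσtype⟩ := classify (P.map f) hPbar
  rcases hσtype with htype | htype
  · -- permutation case
    have hperm := permCase f hf (Equiv.ofBijective σ hσbij) P a b
      (fun l => (funit _).mpr ((htype l (σ l)).trans (if_pos rfl)))
      (fun l m hlm => (hf _).mp ((htype l m).trans (if_neg fun hh : m = σ l => hlm hh)))
      hP
    exact AddSubgroup.closure_mono Set.subset_union_left hperm
  · -- extraordinary case
    obtain ⟨U, V, W, T, hU, hV, hW, hgenT, M, hdetM, hmapM, hgramM⟩ :=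
      bigMove f hf (a 0) (a 1) (a 2) (a 3)
    have hveca : (fun k => ((![a 0, a 1, a 2, a 3] : Fin 4 → Rˣ) k : R))
        = fun i => ((a i : R)) := by
      funext k
      fin_cases k <;> rfl
    rw [hveca] at hgramM
    have hMinv : Invertible M := M.invertibleOfIsUnitDet hdetM
    have hQM : (P * ⅟M) * M = P := by
      rw [Matrix.mul_assoc, invOf_mul_self, Matrix.mul_one]
    have hQgram : (P * ⅟M) * Matrix.diagonal (fun k => ((![U, V, W, T] : Fin 4 → Rˣ) k : R))
        * (P * ⅟M)ᵀ = Matrix.diagonal (fun i => ((b i : R))) := by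
      rw [← hgramM]
      have hinner : ⅟M * (M * Matrix.diagonal (fun i => ((a i : R))) * Mᵀ) * (⅟M)ᵀ
          = Matrix.diagonal (fun i => ((a i : R))) := conj_cancel (invOf_mul_self M)
      calc (P * ⅟M) * (M * Matrix.diagonal (fun i => ((a i : R))) * Mᵀ) * (P * ⅟M)ᵀ
          = P * (⅟M * (M * Matrix.diagonal (fun i => ((a i : R))) * Mᵀ) * (⅟M)ᵀ) * Pᵀ := by
            simp only [Matrix.transpose_mul, Matrix.mul_assoc]
        _ = P * Matrix.diagonal (fun i => ((a i : R))) * Pᵀ := by rw [hinner]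
        _ = _ := hP
    have hDu : (Matrix.diagonal (fun k => ((![U, V, W, T] : Fin 4 → Rˣ) k : R))).map f
        = 1 := by
      rw [Matrix.diagonal_map (_root_.map_zero f)]
      have h1 : (fun k => f ((![U, V, W, T] : Fin 4 → Rˣ) k : R)) = fun _ => (1 : ZMod 2) := by
        funext k
        fin_cases k
        · exact (funit _).mp U.isUnit
        · exact (funit _).mp V.isUnit
        · exact (funit _).mp W.isUnit
        · exact (funit _).mp T.isUnit
      rw [h1, Matrix.diagonal_one]
    have hQbar : ((P * ⅟M).map f) * ((P * ⅟M).map f)ᵀ = 1 := by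
      have h1 := congrArg (fun N => N.map f) hQgram
      simp only [Matrix.map_mul, Matrix.transpose_map] at h1
      rw [hDu, hDb, Matrix.mul_one] at h1
      simp only [← Matrix.map_mul] at h1
      exact h1
    obtain ⟨τ, hτbij, hτtype⟩ := classify ((P * ⅟M).map f) hQbar
    rcases hτtype with ht1 | ht3
    · have hperm := permCase f hf (Equiv.ofBijective τ hτbij) (P * ⅟M) ![U, V, W, T] b
        (fun l => (funit _).mpr ((ht1 l (τ l)).trans (if_pos rfl)))
        (fun l m hlm => (hf _).mp ((ht1 l m).trans (if_neg fun hh : m = τ l => hlm hh)))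
        hQgram
      have hmem2 : (gen (a 0) + gen (a 1) + gen (a 2) + gen (a 3))
          - (gen U + gen V + gen W + gen T) ∈ AddSubgroup.closure (rel1 R ∪ rel2 R) := by
        apply AddSubgroup.subset_closure
        right
        exact ⟨a 0, a 1, a 2, a 3, U, V, W, hU, hV, hW, by rw [hgenT]⟩
      have hsplit : (∑ i, gen (a i)) - (∑ i, gen (b i))
          = ((gen (a 0) + gen (a 1) + gen (a 2) + gen (a 3))
              - (gen U + gen V + gen W + gen T))
            + ((∑ k, gen ((![U, V, W, T] : Fin 4 → Rˣ) k)) - (∑ k, gen (b k))) := by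
        rw [Fin.sum_univ_four (f := fun i => gen (a i)),
          Fin.sum_univ_four (f := fun k => gen ((![U, V, W, T] : Fin 4 → Rˣ) k))]
        show _ = _ + ((gen U + gen V + gen W + gen T) - _)
        abel
      rw [hsplit]
      exact add_mem hmem2 (AddSubgroup.closure_mono Set.subset_union_left hperm)
    · exfalso
      have hmm : ((P * ⅟M).map f) * (M.map f) = P.map f := by
        rw [← Matrix.map_mul, hQM]
      have hPpat : isP (P.map f) (fun i => rho0 (τ i)) := by
        rw [← hmm, hmapM]
        exact mulPattern ht3 EE_isE
      exact clash hPpat htype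

end GWAux

open IsLocalRing in
/-- For a commutative local ring `R` with residue field `𝔽₂`, the additive
subgroup of `ℤ[Rˣ/(Rˣ)²]` generated by the Knebusch–Rosenberg–Ware relations (i.e. the kernel of
the surjection onto `GW(R)`) coincides with the additive subgroup generated by the two explicit
families of relations (1) and (2). -/
theorem gw_presentation_of_residueField_two
    (R : Type) [CommRing R] [IsLocalRing R]
    (h2 : Nonempty (ResidueField R ≃+* ZMod 2)) :
    AddSubgroup.closure (gwRel R) =
      AddSubgroup.closure
        ({x : GRing R | ∃ (a b a' b' : Rˣ) (m n : R),
            m ∈ maximalIdeal R ∧ n ∈ maximalIdeal R ∧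
            m * (a : R) + n * (b : R) = 0 ∧
            (a' : R) = (a : R) + n ^ 2 * (b : R) ∧
            (b' : R) = (b : R) + m ^ 2 * (a : R) ∧
            x = (gen a + gen b) - (gen a' + gen b')} ∪
         {x : GRing R | ∃ (a b c d u v w : Rˣ),
            (u : R) = (a : R) + ((c⁻¹ : Rˣ) : R) + ((d⁻¹ : Rˣ) : R) ∧
            (v : R) = ((a⁻¹ : Rˣ) : R) + ((b⁻¹ : Rˣ) : R) + (d : R) ∧
            (w : R) = (a : R) + (b : R) + (a : R) ^ 2 * (c : R) ∧
            x = (gen a + gen b + gen c + gen d) -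
              (gen u + gen v + gen w + gen (a * b * c * d * (u * v * w)))}) := by

  obtain ⟨φ⟩ := h2
  set f : R →+* ZMod 2 := φ.toRingHom.comp (IsLocalRing.residue R) with hfdef
  have hfx : ∀ x : R, f x = φ (IsLocalRing.residue R x) := fun x => rfl
  have hf : ∀ x : R, f x = 0 ↔ x ∈ maximalIdeal R := by
    intro x
    rw [hfx]
    constructor
    · intro h
      have h0 : IsLocalRing.residue R x = 0 := by
        apply φ.injective
        rw [_root_.map_zero]
        exact h
      exact Ideal.Quotient.eq_zero_iff_mem.mp h0
    · intro h
      have h0 : IsLocalRing.residue R x = 0 := Ideal.Quotient.eq_zero_iff_mem.mpr h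
      rw [h0, _root_.map_zero]
  have hset : ({x : GRing R | ∃ (a b a' b' : Rˣ) (m n : R),
            m ∈ maximalIdeal R ∧ n ∈ maximalIdeal R ∧
            m * (a : R) + n * (b : R) = 0 ∧
            (a' : R) = (a : R) + n ^ 2 * (b : R) ∧
            (b' : R) = (b : R) + m ^ 2 * (a : R) ∧
            x = (gen a + gen b) - (gen a' + gen b')} ∪
         {x : GRing R | ∃ (a b c d u v w : Rˣ),
            (u : R) = (a : R) + ((c⁻¹ : Rˣ) : R) + ((d⁻¹ : Rˣ) : R) ∧
            (v : R) = ((a⁻¹ : Rˣ) : R) + ((b⁻¹ : Rˣ) : R) + (d : R) ∧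
            (w : R) = (a : R) + (b : R) + (a : R) ^ 2 * (c : R) ∧
            x = (gen a + gen b + gen c + gen d) -
              (gen u + gen v + gen w + gen (a * b * c * d * (u * v * w)))})
      = GWAux.rel1 R ∪ GWAux.rel2 R := rfl
  rw [hset]
  apply le_antisymm
  · rw [AddSubgroup.closure_le]
    intro x hx
    exact GWAux.hard f hf x hx
  · rw [AddSubgroup.closure_le]
    rintro x (hx | hx)
    · exact AddSubgroup.subset_closure (GWAux.easy1 f hf hx)
    · exact AddSubgroup.subset_closure (GWAux.easy2 f hf hx)

end
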